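/- Define the free energy of a strict-DNF-encoded formula with clauses j as F(x) = -∑_j log(1 + exp(c·(∑_{t∈T_j} x_t - ∑_{k∈K_j} x_k - |T_j| + ε))) for binary x, confidence c > 0, and 0 < ε < 1. Then the limit as c → ∞ of -(1/(c·ε))·F(x) equals s_φ(x): it is 1 if x satisfies the strict DNF φ and 0 otherwise. -/

import Mathlib

open Filter Real

private lemma aux_neg (ε a : ℝ) (hε : 0 < ε) (ha : a < 0) :
    Tendsto (fun c : ℝ => (1 / (c * ε)) * Real.log (1 + Real.exp (c * a)))
      atTop (nhds 0) := by
  have h1 : Tendsto (fun c : ℝ => 1 / (c * ε)) atTop (nhds 0) := by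
    have : Tendsto (fun c : ℝ => c * ε) atTop atTop :=
      Tendsto.atTop_mul_const hε tendsto_id
    exact this.inv_tendsto_atTop.congr (fun c => by simp [one_div])
  have h2 : Tendsto (fun c : ℝ => Real.log (1 + Real.exp (c * a))) atTop (nhds 0) := by
    have hca : Tendsto (fun c : ℝ => c * a) atTop atBot :=
      Tendsto.atTop_mul_const_of_neg ha tendsto_id
    have hexp : Tendsto (fun c : ℝ => Real.exp (c * a)) atTop (nhds 0) :=
      Real.tendsto_exp_atBot.comp hca
    have hadd : Tendsto (fun c : ℝ => 1 + Real.exp (c * a)) atTop (nhds 1) := by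
      simpa using tendsto_const_nhds.add hexp
    have hlog : Tendsto (fun c : ℝ => Real.log (1 + Real.exp (c * a))) atTop
        (nhds (Real.log 1)) :=
      ((Real.continuousAt_log (by norm_num)).tendsto).comp hadd
    simpa using hlog
  simpa using h1.mul h2

private lemma aux_pos (ε a : ℝ) (hε : 0 < ε) (ha : 0 < a) :
    Tendsto (fun c : ℝ => (1 / (c * ε)) * Real.log (1 + Real.exp (c * a)))
      atTop (nhds (a / ε)) := by
  have h0 : Tendsto (fun c : ℝ =>
      a / ε + (1 / (c * ε)) * Real.log (1 + Real.exp (c * (-a)))) atTop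
      (nhds (a / ε + 0)) :=
    (tendsto_const_nhds (x := a / ε)).add (aux_neg ε (-a) hε (by linarith))
  have heq : ∀ᶠ c : ℝ in atTop,
      a / ε + (1 / (c * ε)) * Real.log (1 + Real.exp (c * (-a)))
        = (1 / (c * ε)) * Real.log (1 + Real.exp (c * a)) := by
    filter_upwards [eventually_gt_atTop (0:ℝ)] with c hc
    have key : Real.log (1 + Real.exp (c * a))
        = c * a + Real.log (1 + Real.exp (c * (-a))) := by
      have h1 : (1 : ℝ) + Real.exp (c * a)
          = Real.exp (c * a) * (1 + Real.exp (c * (-a))) := by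
        rw [mul_add, mul_one, ← Real.exp_add,
          show c * a + c * (-a) = 0 by ring, Real.exp_zero]
        ring
      rw [h1, Real.log_mul (Real.exp_ne_zero _) (by positivity), Real.log_exp]
    rw [key]
    have hcε : c * ε ≠ 0 := by positivity
    field_simp
  have : Tendsto (fun c : ℝ =>
      a / ε + (1 / (c * ε)) * Real.log (1 + Real.exp (c * (-a)))) atTop
      (nhds (a / ε)) := by simpa using h0
  exact Tendsto.congr' heq this

open Classical in
theorem free_energy_limit_truth_value {ι : Type*} (J : Finset ι) (T K : ι → Finset ℕ)
    (ε : ℝ) (hε : 0 < ε) (hε1 : ε < 1)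
    (hdisj : ∀ j ∈ J, Disjoint (T j) (K j))
    (hstrict : ∀ y : ℕ → ℝ, (∀ i, y i = 0 ∨ y i = 1) → ∀ j1 ∈ J, ∀ j2 ∈ J,
      ((∀ t ∈ T j1, y t = 1) ∧ (∀ k ∈ K j1, y k = 0)) →
      ((∀ t ∈ T j2, y t = 1) ∧ (∀ k ∈ K j2, y k = 0)) → j1 = j2)
    (x : ℕ → ℝ) (hx : ∀ i, x i = 0 ∨ x i = 1) :
    Filter.Tendsto (fun c : ℝ =>
        -(1 / (c * ε)) * (-(∑ j ∈ J, Real.log (1 + Real.exp (c *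
          (∑ t ∈ T j, x t - ∑ k ∈ K j, x k - ((T j).card : ℝ) + ε))))))
      Filter.atTop
      (nhds (if ∃ j ∈ J, (∀ t ∈ T j, x t = 1) ∧ (∀ k ∈ K j, x k = 0)
        then (1 : ℝ) else 0)) := by
  classical
  set sat : ι → Prop := fun j => (∀ t ∈ T j, x t = 1) ∧ (∀ k ∈ K j, x k = 0) with hsat
  set a : ι → ℝ := fun j =>
    ∑ t ∈ T j, x t - ∑ k ∈ K j, x k - ((T j).card : ℝ) + ε with ha
  -- values of a j
  have hsum_le : ∀ j, ∑ t ∈ T j, x t ≤ ((T j).card : ℝ) := by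
    intro j
    calc ∑ t ∈ T j, x t ≤ ∑ t ∈ T j, (1:ℝ) :=
          Finset.sum_le_sum (fun i _ => by rcases hx i with h | h <;> simp [h])
      _ = ((T j).card : ℝ) := by simp
  have hsumK_nonneg : ∀ j, (0:ℝ) ≤ ∑ k ∈ K j, x k := by
    intro j
    exact Finset.sum_nonneg (fun i _ => by rcases hx i with h | h <;> simp [h])
  have haval : ∀ j, (sat j → a j = ε) ∧ (¬ sat j → a j ≤ ε - 1) := by
    intro j
    constructor
    · rintro ⟨h1, h2⟩
      have hT : ∑ t ∈ T j, x t = ((T j).card : ℝ) := by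
        rw [Finset.sum_congr rfl h1]; simp
      have hK : ∑ k ∈ K j, x k = 0 := by
        rw [Finset.sum_congr rfl h2]; simp
      simp [ha, hT, hK]
    · intro hns
      have hns' : ¬ ((∀ t ∈ T j, x t = 1) ∧ (∀ k ∈ K j, x k = 0)) := hns
      rcases not_and_or.mp hns' with hT | hK
      swap
      · push_neg at hK
        obtain ⟨k, hk, hk0⟩ := hK
        have hxk : x k = 1 := (hx k).resolve_left hk0
        have hle : x k ≤ ∑ k ∈ K j, x k := Finset.single_le_sum
          (f := x) (fun i _ => by rcases hx i with h | h <;> simp [h]) hk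
        have := hsum_le j
        simp only [ha]
        linarith
      · push_neg at hT
        obtain ⟨t, ht, ht1⟩ := hT
        have hxt : x t = 0 := (hx t).resolve_right ht1
        have hT1 : ∑ s ∈ T j, x s ≤ ((T j).card : ℝ) - 1 := by
          have hsplit : ∑ s ∈ T j, x s
              = x t + ∑ s ∈ (T j).erase t, x s := by
            rw [← Finset.sum_erase_add _ _ ht]; ring
          have hle : ∑ s ∈ (T j).erase t, x s ≤ (((T j).erase t).card : ℝ) := by
            calc ∑ s ∈ (T j).erase t, x s ≤ ∑ s ∈ (T j).erase t, (1:ℝ) :=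
                  Finset.sum_le_sum (fun i _ => by rcases hx i with h | h <;> simp [h])
              _ = _ := by simp
          have hcard : (((T j).erase t).card : ℝ) = ((T j).card : ℝ) - 1 := by
            rw [Finset.card_erase_of_mem ht]
            have : 1 ≤ (T j).card := Finset.card_pos.mpr ⟨t, ht⟩
            push_cast [Nat.cast_sub this]
            ring
          rw [hsplit, hxt]; linarith
        have := hsumK_nonneg j
        simp only [ha]
        linarith
  -- per-clause limit
  have hterm : ∀ j ∈ J, Tendsto (fun c : ℝ =>
      (1 / (c * ε)) * Real.log (1 + Real.exp (c * a j))) atTop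
      (nhds (if sat j then (1:ℝ) else 0)) := by
    intro j _
    by_cases hj : sat j
    · rw [if_pos hj]
      have hval := (haval j).1 hj
      have h := aux_pos ε (a j) hε (by rw [hval]; exact hε)
      simpa [hval, div_self (ne_of_gt hε)] using h
    · rw [if_neg hj]
      exact aux_neg ε (a j) hε (by linarith [(haval j).2 hj])
  -- rewrite to sum of terms
  have hfun : ∀ c : ℝ,
      -(1 / (c * ε)) * (-(∑ j ∈ J, Real.log (1 + Real.exp (c * a j))))
        = ∑ j ∈ J, (1 / (c * ε)) * Real.log (1 + Real.exp (c * a j)) := by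
    intro c
    rw [neg_mul_neg, Finset.mul_sum]
  have hsumlim : Tendsto (fun c : ℝ =>
      ∑ j ∈ J, (1 / (c * ε)) * Real.log (1 + Real.exp (c * a j))) atTop
      (nhds (∑ j ∈ J, if sat j then (1:ℝ) else 0)) :=
    tendsto_finset_sum J hterm
  have hval : (∑ j ∈ J, if sat j then (1:ℝ) else 0)
      = if ∃ j ∈ J, sat j then (1:ℝ) else 0 := by
    rw [Finset.sum_boole]
    by_cases hex : ∃ j ∈ J, sat j
    · obtain ⟨j0, hj0, hj0s⟩ := hex
      have hfilter : J.filter (fun j => sat j) = {j0} := by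
        apply Finset.eq_singleton_iff_unique_mem.mpr
        refine ⟨Finset.mem_filter.mpr ⟨hj0, hj0s⟩, ?_⟩
        intro j hj
        obtain ⟨hjJ, hjs⟩ := Finset.mem_filter.mp hj
        exact hstrict x hx j hjJ j0 hj0 hjs hj0s
      rw [hfilter]
      simp only [Finset.card_singleton, Nat.cast_one]
      rw [if_pos ⟨j0, hj0, hj0s⟩]
    · have hfilter : J.filter (fun j => sat j) = ∅ := by
        apply Finset.filter_eq_empty_iff.mpr
        intro j hj hjs
        exact hex ⟨j, hj, hjs⟩
      rw [hfilter, if_neg hex]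
      simp
  rw [← hval]
  exact hsumlim.congr (fun c => (hfun c).symm)
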